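/- arXiv:2503.01618 — 3 statements merged into one kernel-verified Lean document; each statement's English description precedes it below -/
import Mathlib

section
/- Energy dissipation law for the SAV reformulation: suppose (φ, r, μ) satisfies the SAV system. Then for every t ∈ ℝ, the function t ↦ (1/2)⟨φ(t), L(φ(t))⟩ + r(t)² is differentiable at t and its derivative equals ⟨μ(t), G(μ(t))⟩. -/
open scoped InnerProductSpace

/-- Energy dissipation law for the SAV reformulation: if `(φ, r, μ)` satisfies the SAV
system, then the modified energy `t ↦ (1/2)⟨φ(t), L(φ(t))⟩ + r(t)²` is differentiable
with derivative `⟨μ(t), G(μ(t))⟩`. -/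
theorem sav_energy_dissipation
    {H : Type*} [NormedAddCommGroup H] [InnerProductSpace ℝ H] [CompleteSpace H]
    (L G : H →L[ℝ] H) (hL : IsSelfAdjoint L)
    (E₁ : H → ℝ) (U : H → H) (hU : ∀ ψ : H, HasGradientAt E₁ (U ψ) ψ)
    (φ : ℝ → H) (φ' : ℝ → H) (r r' : ℝ → ℝ) (μ : ℝ → H)
    (hφ : ∀ t : ℝ, HasDerivAt φ (φ' t) t)
    (hr : ∀ t : ℝ, HasDerivAt r (r' t) t)
    (hpos : ∀ t : ℝ, 0 < E₁ (φ t))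
    (heq_mu : ∀ t : ℝ, φ' t = G (μ t))
    (heq_phi : ∀ t : ℝ, μ t = L (φ t) + (r t / Real.sqrt (E₁ (φ t))) • U (φ t))
    (heq_r : ∀ t : ℝ, r' t = (1 / (2 * Real.sqrt (E₁ (φ t)))) * ⟪U (φ t), φ' t⟫_ℝ) :
    ∀ t : ℝ,
      HasDerivAt (fun s : ℝ => (1 / 2) * ⟪φ s, L (φ s)⟫_ℝ + (r s) ^ 2)
        (⟪μ t, G (μ t)⟫_ℝ) t := by
  intro t
  have hLφ : HasDerivAt (fun s => L (φ s)) (L (φ' t)) t :=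
    L.hasFDerivAt.comp_hasDerivAt t (hφ t)
  have h1 : HasDerivAt (fun s : ℝ => ⟪φ s, L (φ s)⟫_ℝ)
      (⟪φ t, L (φ' t)⟫_ℝ + ⟪φ' t, L (φ t)⟫_ℝ) t := (hφ t).inner ℝ hLφ
  have h2 : HasDerivAt (fun s : ℝ => (r s) ^ 2) (2 * r t * r' t) t := by
    simpa [mul_comm] using ((hr t).fun_pow 2)
  have hsum := ((h1.const_mul ((1:ℝ)/2)).add h2)
  refine hsum.congr_deriv (Eq.symm ?_)
  have hsa : ⟪φ t, L (φ' t)⟫_ℝ = ⟪φ' t, L (φ t)⟫_ℝ :=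
    (hL.isSymmetric (φ t) (φ' t)).symm.trans (real_inner_comm _ _)
  have hs : Real.sqrt (E₁ (φ t)) > 0 := Real.sqrt_pos.mpr (hpos t)
  rw [show G (μ t) = φ' t from (heq_mu t).symm, heq_phi t, inner_add_left, real_inner_smul_left,
    real_inner_comm (L (φ t)) (φ' t), heq_r t, hsa]
  field_simp
  rw [real_inner_comm (φ' t) (L (φ t))]
  ring
end

section
/- Unconditional energy stability of the SAV reformulation: suppose (φ, r, μ) satisfies the SAV system and additionally the operator G is dissipative, i.e. ⟨x, G(x)⟩ ≤ 0 for every x ∈ H. Then the modified energy t ↦ (1/2)⟨φ(t), L(φ(t))⟩ + r(t)² is monotone nonincreasing on ℝ. -/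
open scoped InnerProductSpace

/-- Unconditional energy stability of the SAV reformulation: if `(φ, r, μ)` satisfies the
SAV system and `G` is dissipative (`⟪x, G x⟫ ≤ 0` for all `x`), then the modified energy
`t ↦ (1/2)⟨φ(t), L(φ(t))⟩ + r(t)²` is monotone nonincreasing on `ℝ`. -/
theorem sav_energy_stability
    {H : Type*} [NormedAddCommGroup H] [InnerProductSpace ℝ H] [CompleteSpace H]
    (L G : H →L[ℝ] H) (hL : IsSelfAdjoint L)
    (hG : ∀ x : H, ⟪x, G x⟫_ℝ ≤ 0)
    (E₁ : H → ℝ) (U : H → H) (hU : ∀ ψ : H, HasGradientAt E₁ (U ψ) ψ)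
    (φ : ℝ → H) (φ' : ℝ → H) (r r' : ℝ → ℝ) (μ : ℝ → H)
    (hφ : ∀ t : ℝ, HasDerivAt φ (φ' t) t)
    (hr : ∀ t : ℝ, HasDerivAt r (r' t) t)
    (hpos : ∀ t : ℝ, 0 < E₁ (φ t))
    (heq_mu : ∀ t : ℝ, φ' t = G (μ t))
    (heq_phi : ∀ t : ℝ, μ t = L (φ t) + (r t / Real.sqrt (E₁ (φ t))) • U (φ t))
    (heq_r : ∀ t : ℝ, r' t = (1 / (2 * Real.sqrt (E₁ (φ t)))) * ⟪U (φ t), φ' t⟫_ℝ) :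
    Antitone (fun s : ℝ => (1 / 2) * ⟪φ s, L (φ s)⟫_ℝ + (r s) ^ 2) := by
  apply antitone_of_hasDerivAt_nonpos (f' := fun t => ⟪μ t, G (μ t)⟫_ℝ)
  · intro t
    have hLφ : HasDerivAt (fun s => L (φ s)) (L (φ' t)) t :=
      L.hasFDerivAt.comp_hasDerivAt t (hφ t)
    have h1 : HasDerivAt (fun s => ⟪φ s, L (φ s)⟫_ℝ)
        (⟪φ t, L (φ' t)⟫_ℝ + ⟪φ' t, L (φ t)⟫_ℝ) t := (hφ t).inner ℝ hLφ
    have h2 : HasDerivAt (fun s => (r s) ^ 2) (2 * r t * r' t) t := by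
      simpa [mul_comm, mul_assoc] using ((hr t).fun_pow 2)
    have key : (1 / 2) * (⟪φ t, L (φ' t)⟫_ℝ + ⟪φ' t, L (φ t)⟫_ℝ) + 2 * r t * r' t
        = ⟪μ t, G (μ t)⟫_ℝ := by
      have hsym : ⟪φ' t, L (φ t)⟫_ℝ = ⟪L (φ t), φ' t⟫_ℝ := real_inner_comm _ _
      have hsa : ⟪φ t, L (φ' t)⟫_ℝ = ⟪L (φ t), φ' t⟫_ℝ :=
        (hL.isSymmetric (φ t) (φ' t)).symm
      have hE : Real.sqrt (E₁ (φ t)) ≠ 0 :=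
        ne_of_gt (Real.sqrt_pos.mpr (hpos t))
      rw [hsym, hsa, heq_r t, ← heq_mu t, heq_phi t, inner_add_left, real_inner_smul_left]
      field_simp
      ring
    have := (h1.const_mul (1/2 : ℝ)).add h2
    rwa [key] at this
  · intro t
    simpa [heq_mu t] using hG (μ t)
end

section
/- Consistency of the SAV reformulation with the gradient flow: let φ : ℝ → H be a differentiable curve with E₁(φ(t)) > 0 for all t that solves the original gradient flow φ'(t) = G(L(φ(t)) + U(φ(t))) for all t. Define r(t) := √(E₁(φ(t))) and μ(t) := L(φ(t)) + (r(t)/√(E₁(φ(t)))) • U(φ(t)). Then r is differentiable and the triple (φ, r, μ) satisfies the SAV system; in particular μ(t) = L(φ(t)) + U(φ(t)) for all t. -/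
open scoped InnerProductSpace

/-- Consistency of the SAV reformulation with the gradient flow: if `φ` solves the
original gradient flow `φ' = G(Lφ + U(φ))` with `E₁(φ(t)) > 0`, then with
`r(t) := √(E₁(φ(t)))` and `μ(t) := L(φ(t)) + (r(t)/√(E₁(φ(t)))) • U(φ(t))`,
the function `r` is differentiable with the SAV derivative, `(φ, r, μ)` satisfies the
SAV system, and in particular `μ(t) = L(φ(t)) + U(φ(t))` for all `t`. -/
theorem sav_consistency
    {H : Type*} [NormedAddCommGroup H] [InnerProductSpace ℝ H] [CompleteSpace H]
    (L G : H →L[ℝ] H) (hL : IsSelfAdjoint L)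
    (E₁ : H → ℝ) (U : H → H) (hU : ∀ ψ : H, HasGradientAt E₁ (U ψ) ψ)
    (φ : ℝ → H) (φ' : ℝ → H)
    (hφ : ∀ t : ℝ, HasDerivAt φ (φ' t) t)
    (hpos : ∀ t : ℝ, 0 < E₁ (φ t))
    (hflow : ∀ t : ℝ, φ' t = G (L (φ t) + U (φ t)))
    (r : ℝ → ℝ) (hr_def : ∀ t : ℝ, r t = Real.sqrt (E₁ (φ t)))
    (μ : ℝ → H)
    (hμ_def : ∀ t : ℝ, μ t = L (φ t) + (r t / Real.sqrt (E₁ (φ t))) • U (φ t)) :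
    ∀ t : ℝ,
      HasDerivAt r ((1 / (2 * Real.sqrt (E₁ (φ t)))) * ⟪U (φ t), φ' t⟫_ℝ) t ∧
      φ' t = G (μ t) ∧
      μ t = L (φ t) + U (φ t) := by
  intro t
  have hs : Real.sqrt (E₁ (φ t)) ≠ 0 := ne_of_gt (Real.sqrt_pos.2 (hpos t))
  have hμ : μ t = L (φ t) + U (φ t) := by
    rw [hμ_def t, hr_def t, div_self hs, one_smul]
  refine ⟨?_, ?_, hμ⟩
  · have hE : HasDerivAt (fun t => E₁ (φ t)) ⟪U (φ t), φ' t⟫_ℝ t := by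
      have := ((hU (φ t)).hasFDerivAt.comp t (hφ t).hasFDerivAt).hasDerivAt
      simp only [Function.comp_def] at this
      simpa using this
    have hfun : r = fun t => Real.sqrt (E₁ (φ t)) := funext hr_def
    have := hE.sqrt (ne_of_gt (hpos t))
    rw [← hfun] at this
    convert this using 1
    ring
  · rw [hμ, hflow t]
end
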